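/- arXiv:1512.07494 — 4 statements merged into one kernel-verified Lean document; each statement's English description precedes it below -/
import Mathlib

section
/- The elementary operations of an independent edit path between two graphs G1 and G2 can be reordered into a valid independent edit path consisting of a sequence of removals, followed by a sequence of substitutions, followed by a sequence of insertions, transforming G1 into G2 with the same multiset of operations (hence the same cost). -/
/-- Elementary edit operations on labeled graphs. -/
inductive EditOp (L : Type) where
  | rmV (v : ℕ)
  | rmE (e : ℕ × ℕ)
  | insV (v : ℕ) (l : L)
  | insE (e : ℕ × ℕ) (l : L)
  | subV (v : ℕ) (l : L)
  | subE (e : ℕ × ℕ) (l : L)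

/-- A labeled graph (not assumed simple a priori). -/
structure LGraph (L : Type) where
  V : Finset ℕ
  E : Finset (ℕ × ℕ)
  μ : ℕ → L
  ν : ℕ × ℕ → L

/-- A graph is simple: edges join existing vertices, at most one edge per
ordered pair (automatic from `Finset`), and no self-loops. -/
def LGraph.IsSimple {L : Type} (G : LGraph L) : Prop :=
  (∀ e ∈ G.E, e.1 ∈ G.V ∧ e.2 ∈ G.V) ∧ (∀ e ∈ G.E, e.1 ≠ e.2)

/-- The effect of an elementary edit operation on a graph. -/
def LGraph.apply {L : Type} (G : LGraph L) : EditOp L → LGraph L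
  | .rmV v => { G with V := G.V.erase v }
  | .rmE e => { G with E := G.E.erase e }
  | .insV v l => { G with V := insert v G.V, μ := Function.update G.μ v l }
  | .insE e l => { G with E := insert e G.E, ν := Function.update G.ν e l }
  | .subV v l => { G with μ := Function.update G.μ v l }
  | .subE e l => { G with ν := Function.update G.ν e l }

/-- Edit-path legality constraints for an elementary operation: a node may be
removed only after all its incident edges have been removed; an edge may be
inserted only between two existing nodes, without creating a parallel edge or
a self-loop; removals and substitutions apply to existing elements; node
insertion requires a fresh node. -/
def LGraph.Legal {L : Type} (G : LGraph L) : EditOp L → Prop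
  | .rmV v => v ∈ G.V ∧ ∀ e ∈ G.E, e.1 ≠ v ∧ e.2 ≠ v
  | .rmE e => e ∈ G.E
  | .insV v _ => v ∉ G.V
  | .insE e _ => e.1 ∈ G.V ∧ e.2 ∈ G.V ∧ e ∉ G.E ∧ e.1 ≠ e.2
  | .subV v _ => v ∈ G.V
  | .subE e _ => e ∈ G.E

/-- `IsEditPath G P G'` : the sequence of elementary operations `P` is an edit
path of `G` (each operation is legal when performed) transforming `G` into `G'`. -/
inductive IsEditPath {L : Type} : LGraph L → List (EditOp L) → LGraph L → Prop
  | nil (G : LGraph L) : IsEditPath G [] G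
  | cons {G G'' : LGraph L} {op : EditOp L} {P : List (EditOp L)} :
      G.Legal op → IsEditPath (G.apply op) P G'' → IsEditPath G (op :: P) G''

/-- Classification of elementary operations. -/
def EditOp.isRemoval {L : Type} : EditOp L → Prop
  | .rmV _ => True | .rmE _ => True | _ => False

def EditOp.isSubstitution {L : Type} : EditOp L → Prop
  | .subV _ _ => True | .subE _ _ => True | _ => False

def EditOp.isInsertion {L : Type} : EditOp L → Prop
  | .insV _ _ => True | .insE _ _ => True | _ => False

/-- An independent edit path: no node or edge is both substituted and removed,
none is both substituted and inserted, no inserted element is later removed,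
and every node or edge is substituted at most once. -/
def Indep {L : Type} (P : List (EditOp L)) : Prop :=
  (∀ v l, EditOp.subV v l ∈ P → EditOp.rmV (L := L) v ∉ P) ∧
  (∀ e l, EditOp.subE e l ∈ P → EditOp.rmE (L := L) e ∉ P) ∧
  (∀ v l l', EditOp.subV v l ∈ P → EditOp.insV v l' ∉ P) ∧
  (∀ e l l', EditOp.subE e l ∈ P → EditOp.insE e l' ∉ P) ∧
  (∀ v l, ¬ List.Sublist [EditOp.insV v l, EditOp.rmV v] P) ∧
  (∀ e l, ¬ List.Sublist [EditOp.insE e l, EditOp.rmE e] P) ∧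
  (∀ v, P.countP (fun op => match op with | .subV w _ => decide (w = v) | _ => false) ≤ 1) ∧
  (∀ e, P.countP (fun op => match op with | .subE f _ => decide (f = e) | _ => false) ≤ 1)

/-! ### Auxiliary material for the proof -/

/-- Rank of an operation: removals first, then substitutions, then insertions. -/
def EditOp.rank {L : Type} : EditOp L → ℕ
  | .rmV _ => 0
  | .rmE _ => 0
  | .subV _ _ => 1
  | .subE _ _ => 1
  | .insV _ _ => 2
  | .insE _ _ => 2

/-- The order relation used for sorting operations. -/
def ROrd {L : Type} : EditOp L → EditOp L → Prop := fun a b => a.rank ≤ b.rank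

instance {L : Type} : DecidableRel (ROrd (L := L)) := fun _ _ => Nat.decLe _ _
instance {L : Type} : IsTotal (EditOp L) ROrd := ⟨fun _ _ => Nat.le_total _ _⟩
instance {L : Type} : IsTrans (EditOp L) ROrd := ⟨fun _ _ _ => Nat.le_trans⟩

/-- The independence facts needed to commute `a` (performed first) past `b`. -/
def Good {L : Type} : EditOp L → EditOp L → Prop
  | .insV v _, .rmV w => v ≠ w
  | .insE e _, .rmE f => e ≠ f
  | .insV v _, .subV w _ => v ≠ w
  | .insE e _, .subE f _ => e ≠ f
  | .subV v _, .rmV w => v ≠ w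
  | .subE e _, .rmE f => e ≠ f
  | _, _ => True

/-- Key commutation lemma: an operation of smaller rank can be moved in front
of an operation of larger rank, provided the `Good` independence condition. -/
lemma swap_path {L : Type} {a b : EditOp L} {G G' : LGraph L} {P : List (EditOp L)}
    (hr : b.rank < a.rank) (hg : Good a b)
    (hp : IsEditPath G (a :: b :: P) G') : IsEditPath G (b :: a :: P) G' := by
  rcases hp with _ | ⟨ha, hp⟩
  rcases hp with _ | ⟨hb, hp⟩
  cases a <;> cases b <;> simp only [EditOp.rank] at hr <;> try omega
  case insV.rmV v l w =>
    simp only [Good] at hg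
    simp only [LGraph.Legal, LGraph.apply] at ha hb ⊢
    obtain ⟨hw, hE⟩ := hb
    have hwV : w ∈ G.V := by
      rcases Finset.mem_insert.mp hw with h | h
      · exact absurd h.symm hg
      · exact h
    have heq : (G.apply (.insV v l)).apply (.rmV w) = (G.apply (.rmV w)).apply (.insV v l) := by
      simp [LGraph.apply, Finset.erase_insert_of_ne hg]
    rw [heq] at hp
    exact .cons (by exact ⟨hwV, hE⟩) (.cons (by
      simp only [LGraph.Legal, LGraph.apply]
      exact fun hv => ha (Finset.mem_of_mem_erase hv)) hp)
  case insV.rmE v l e =>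
    simp only [LGraph.Legal, LGraph.apply] at ha hb ⊢
    exact .cons hb (.cons (by simpa [LGraph.Legal, LGraph.apply] using ha) hp)
  case insV.subV v l w l' =>
    simp only [Good] at hg
    simp only [LGraph.Legal, LGraph.apply] at ha hb ⊢
    have hwV : w ∈ G.V := by
      rcases Finset.mem_insert.mp hb with h | h
      · exact absurd h.symm hg
      · exact h
    have heq : (G.apply (.insV v l)).apply (.subV w l') = (G.apply (.subV w l')).apply (.insV v l) := by
      simp [LGraph.apply, Function.update_comm hg]
    rw [heq] at hp
    exact .cons hwV (.cons (by simpa [LGraph.Legal, LGraph.apply] using ha) hp)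
  case insV.subE v l e l' =>
    simp only [LGraph.Legal, LGraph.apply] at ha hb ⊢
    exact .cons hb (.cons (by simpa [LGraph.Legal, LGraph.apply] using ha) hp)
  case insE.rmV e l w =>
    simp only [LGraph.Legal, LGraph.apply] at ha hb ⊢
    obtain ⟨hw, hE⟩ := hb
    obtain ⟨h1, h2, h3, h4⟩ := ha
    have he1 : e.1 ≠ w ∧ e.2 ≠ w := hE e (Finset.mem_insert_self _ _)
    refine .cons ⟨hw, fun f hf => hE f (Finset.mem_insert_of_mem hf)⟩ (.cons ?_ hp)
    simp only [LGraph.Legal, LGraph.apply]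
    exact ⟨Finset.mem_erase.mpr ⟨he1.1, h1⟩, Finset.mem_erase.mpr ⟨he1.2, h2⟩, h3, h4⟩
  case insE.rmE e l f =>
    simp only [Good] at hg
    simp only [LGraph.Legal, LGraph.apply] at ha hb ⊢
    obtain ⟨h1, h2, h3, h4⟩ := ha
    have hfE : f ∈ G.E := by
      rcases Finset.mem_insert.mp hb with h | h
      · exact absurd h.symm hg
      · exact h
    have heq : (G.apply (.insE e l)).apply (.rmE f) = (G.apply (.rmE f)).apply (.insE e l) := by
      simp [LGraph.apply, Finset.erase_insert_of_ne hg]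
    rw [heq] at hp
    refine .cons hfE (.cons ?_ hp)
    simp only [LGraph.Legal, LGraph.apply]
    exact ⟨h1, h2, fun h => h3 (Finset.mem_of_mem_erase h), h4⟩
  case insE.subV e l w l' =>
    simp only [LGraph.Legal, LGraph.apply] at ha hb ⊢
    exact .cons hb (.cons (by simpa [LGraph.Legal, LGraph.apply] using ha) hp)
  case insE.subE e l f l' =>
    simp only [Good] at hg
    simp only [LGraph.Legal, LGraph.apply] at ha hb ⊢
    have hfE : f ∈ G.E := by
      rcases Finset.mem_insert.mp hb with h | h
      · exact absurd h.symm hg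
      · exact h
    have heq : (G.apply (.insE e l)).apply (.subE f l') = (G.apply (.subE f l')).apply (.insE e l) := by
      simp [LGraph.apply, Function.update_comm hg]
    rw [heq] at hp
    exact .cons hfE (.cons (by simpa [LGraph.Legal, LGraph.apply] using ha) hp)
  case subV.rmV v l w =>
    simp only [Good] at hg
    simp only [LGraph.Legal, LGraph.apply] at ha hb ⊢
    refine .cons hb (.cons ?_ hp)
    simp only [LGraph.Legal, LGraph.apply]
    exact Finset.mem_erase.mpr ⟨hg, ha⟩
  case subV.rmE v l e =>
    simp only [LGraph.Legal, LGraph.apply] at ha hb ⊢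
    exact .cons hb (.cons (by simpa [LGraph.Legal, LGraph.apply] using ha) hp)
  case subE.rmV e l w =>
    simp only [LGraph.Legal, LGraph.apply] at ha hb ⊢
    exact .cons hb (.cons (by simpa [LGraph.Legal, LGraph.apply] using ha) hp)
  case subE.rmE e l f =>
    simp only [Good] at hg
    simp only [LGraph.Legal, LGraph.apply] at ha hb ⊢
    refine .cons hb (.cons ?_ hp)
    simp only [LGraph.Legal, LGraph.apply]
    exact Finset.mem_erase.mpr ⟨hg, ha⟩

lemma orderedInsert_path {L : Type} {a : EditOp L} :
    ∀ {Q : List (EditOp L)} {G G' : LGraph L},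
      IsEditPath G (a :: Q) G' → (∀ b ∈ Q, Good a b) →
      IsEditPath G (List.orderedInsert ROrd a Q) G'
  | [], _, _, hp, _ => by simpa using hp
  | b :: Q, G, G', hp, hg => by
    by_cases h : ROrd a b
    · simpa [List.orderedInsert, h] using hp
    · have hr : b.rank < a.rank := Nat.lt_of_not_le h
      have hp' := swap_path hr (hg b List.mem_cons_self) hp
      rcases hp' with _ | ⟨hbL, hp'⟩
      simpa [List.orderedInsert, h] using
        IsEditPath.cons hbL
          (orderedInsert_path hp' (fun c hc => hg c (List.mem_cons_of_mem _ hc)))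

lemma insertionSort_path {L : Type} :
    ∀ {P : List (EditOp L)} {G G' : LGraph L},
      IsEditPath G P G' → List.Pairwise Good P →
      IsEditPath G (List.insertionSort ROrd P) G'
  | [], _, _, hp, _ => by simpa using hp
  | a :: P, G, G', hp, hPw => by
    rcases hp with _ | ⟨ha, hp⟩
    rcases hPw with _ | ⟨hg, hPw⟩
    have ih := insertionSort_path hp hPw
    simpa [List.insertionSort] using
      orderedInsert_path (IsEditPath.cons ha ih)
        (fun b hb => hg b ((List.perm_insertionSort ROrd P).mem_iff.mp hb))

lemma indep_pairwise_good {L : Type} {P : List (EditOp L)} (h : Indep P) :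
    List.Pairwise Good P := by
  rw [List.pairwise_iff_forall_sublist]
  intro a b hsub
  obtain ⟨h1, h2, h3, h4, h5, h6, -, -⟩ := h
  have hma : a ∈ P := hsub.subset (by simp)
  have hmb : b ∈ P := hsub.subset (by simp)
  cases a <;> cases b <;> simp only [Good] <;> try trivial
  case insV.rmV v l w => rintro rfl; exact h5 v l hsub
  case insE.rmE e l f => rintro rfl; exact h6 e l hsub
  case insV.subV v l w l' => rintro rfl; exact h3 v l' l hmb hma
  case insE.subE e l f l' => rintro rfl; exact h4 e l' l hmb hma
  case subV.rmV v l w => rintro rfl; exact h1 v l hma hmb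
  case subE.rmE e l f => rintro rfl; exact h2 e l hma hmb

lemma sorted_split {L : Type} :
    ∀ {l : List (EditOp L)}, List.Pairwise ROrd l →
      ∃ R S I : List (EditOp L), l = R ++ S ++ I ∧
        (∀ op ∈ R, EditOp.rank op = 0) ∧ (∀ op ∈ S, EditOp.rank op = 1) ∧
        (∀ op ∈ I, EditOp.rank op = 2)
  | [], _ => ⟨[], [], [], by simp, by simp, by simp, by simp⟩
  | a :: l, hs => by
    rcases hs with _ | ⟨hal, hs⟩
    obtain ⟨R, S, I, rfl, hR, hS, hI⟩ := sorted_split hs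
    have hrk : a.rank = 0 ∨ a.rank = 1 ∨ a.rank = 2 := by
      cases a <;> simp [EditOp.rank]
    rcases hrk with h0 | h1 | h2
    · exact ⟨a :: R, S, I, by simp, by
        intro op hop
        rcases List.mem_cons.mp hop with rfl | hop
        · exact h0
        · exact hR op hop, hS, hI⟩
    · have hRnil : R = [] := by
        cases R with
        | nil => rfl
        | cons r R' =>
          have : a.rank ≤ r.rank := hal r (by simp)
          have := hR r (by simp)
          omega
      subst hRnil
      exact ⟨[], a :: S, I, by simp, by simp, by
        intro op hop
        rcases List.mem_cons.mp hop with rfl | hop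
        · exact h1
        · exact hS op hop, hI⟩
    · have hRnil : R = [] := by
        cases R with
        | nil => rfl
        | cons r R' =>
          have : a.rank ≤ r.rank := hal r (by simp)
          have := hR r (by simp)
          omega
      subst hRnil
      have hSnil : S = [] := by
        cases S with
        | nil => rfl
        | cons s S' =>
          have : a.rank ≤ s.rank := hal s (by simp)
          have := hS s (by simp)
          omega
      subst hSnil
      exact ⟨[], [], a :: I, by simp, by simp, by simp, by
        intro op hop
        rcases List.mem_cons.mp hop with rfl | hop
        · exact h2
        · exact hI op hop⟩

lemma sublist_pair_split {α : Type*} {x y : α} {A B : List α}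
    (h : List.Sublist [x, y] (A ++ B)) :
    List.Sublist [x, y] A ∨ List.Sublist [x, y] B ∨ (x ∈ A ∧ y ∈ B) := by
  rw [List.sublist_append_iff] at h
  obtain ⟨l₁, l₂, heq, hA, hB⟩ := h
  rcases l₁ with _ | ⟨a, _ | ⟨b, t⟩⟩
  · simp only [List.nil_append] at heq
    right; left; exact heq ▸ hB
  · simp only [List.singleton_append, List.cons.injEq] at heq
    obtain ⟨rfl, hl₂⟩ := heq
    rw [← hl₂] at hB
    exact Or.inr (Or.inr ⟨List.singleton_sublist.mp hA, List.singleton_sublist.mp hB⟩)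
  · simp only [List.cons_append, List.cons.injEq] at heq
    obtain ⟨rfl, rfl, htl⟩ := heq
    obtain ⟨rfl, rfl⟩ := List.append_eq_nil_iff.mp htl.symm
    left; simpa using hA

/-- the operations of an independent edit path from `G1` to `G2`
can be reordered into removals, then substitutions, then insertions, giving a
valid independent edit path from `G1` to `G2` with the same multiset of
operations (hence the same cost). -/
theorem indep_editPath_reorder {L : Type} (G1 G2 : LGraph L) (P : List (EditOp L))
    (hP : IsEditPath G1 P G2) (hInd : Indep P) :
    ∃ R S I : List (EditOp L),
      (∀ op ∈ R, op.isRemoval) ∧ (∀ op ∈ S, op.isSubstitution) ∧ (∀ op ∈ I, op.isInsertion) ∧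
      (R ++ S ++ I).Perm P ∧ IsEditPath G1 (R ++ S ++ I) G2 ∧ Indep (R ++ S ++ I) := by
  have hpath : IsEditPath G1 (List.insertionSort ROrd P) G2 :=
    insertionSort_path hP (indep_pairwise_good hInd)
  have hperm : (List.insertionSort ROrd P).Perm P := List.perm_insertionSort ROrd P
  obtain ⟨R, S, I, hsplit, hR, hS, hI⟩ :=
    sorted_split (List.pairwise_insertionSort ROrd P)
  rw [hsplit] at hpath hperm
  have hR' : ∀ op ∈ R, EditOp.isRemoval op := by
    intro op hop
    have := hR op hop
    cases op <;> simp [EditOp.rank, EditOp.isRemoval] at this ⊢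
  have hS' : ∀ op ∈ S, EditOp.isSubstitution op := by
    intro op hop
    have := hS op hop
    cases op <;> simp [EditOp.rank, EditOp.isSubstitution] at this ⊢
  have hI' : ∀ op ∈ I, EditOp.isInsertion op := by
    intro op hop
    have := hI op hop
    cases op <;> simp [EditOp.rank, EditOp.isInsertion] at this ⊢
  refine ⟨R, S, I, hR', hS', hI', hperm, hpath, ?_⟩
  obtain ⟨h1, h2, h3, h4, h5, h6, h7, h8⟩ := hInd
  refine ⟨?_, ?_, ?_, ?_, ?_, ?_, ?_, ?_⟩
  · intro v l hmem
    rw [hperm.mem_iff] at hmem ⊢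
    exact h1 v l hmem
  · intro e l hmem
    rw [hperm.mem_iff] at hmem ⊢
    exact h2 e l hmem
  · intro v l l' hmem
    rw [hperm.mem_iff] at hmem ⊢
    exact h3 v l l' hmem
  · intro e l l' hmem
    rw [hperm.mem_iff] at hmem ⊢
    exact h4 e l l' hmem
  · intro v l hsub
    rw [List.append_assoc] at hsub
    rcases sublist_pair_split hsub with h | h | ⟨hx, hy⟩
    · have : EditOp.insV v l ∈ R := h.subset (by simp)
      simpa [EditOp.isRemoval] using hR' _ this
    · have : EditOp.rmV (L := L) v ∈ S ++ I := h.subset (by simp)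
      rcases List.mem_append.mp this with h' | h'
      · simpa [EditOp.isSubstitution] using hS' _ h'
      · simpa [EditOp.isInsertion] using hI' _ h'
    · simpa [EditOp.isRemoval] using hR' _ hx
  · intro e l hsub
    rw [List.append_assoc] at hsub
    rcases sublist_pair_split hsub with h | h | ⟨hx, hy⟩
    · have : EditOp.insE e l ∈ R := h.subset (by simp)
      simpa [EditOp.isRemoval] using hR' _ this
    · have : EditOp.rmE (L := L) e ∈ S ++ I := h.subset (by simp)
      rcases List.mem_append.mp this with h' | h'
      · simpa [EditOp.isSubstitution] using hS' _ h'
      · simpa [EditOp.isInsertion] using hI' _ h'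
    · simpa [EditOp.isRemoval] using hR' _ hx
  · intro v
    rw [hperm.countP_eq]
    exact h7 v
  · intro e
    rw [hperm.countP_eq]
    exact h8 e
end

section
/- Let P be an independent edit path from G1 to G2, reordered as removals R, substitutions S, insertions I. Then the graph \u011c1 obtained from G1 by applying R is a subgraph of G1; the graph \u011c2 obtained from G1 by applying (R,S) is a subgraph of G2; and \u011c1 and \u011c2 have the same underlying unlabeled structure (they are structurally isomorphic). -/
/-- `Subgraph H G` : `H` is a (labeled) subgraph of `G`. -/
def Subgraph {L : Type} (H G : LGraph L) : Prop :=
  H.V ⊆ G.V ∧ H.E ⊆ G.E ∧ (∀ e ∈ H.E, e.1 ∈ H.V ∧ e.2 ∈ H.V) ∧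
  (∀ v ∈ H.V, H.μ v = G.μ v) ∧ (∀ e ∈ H.E, H.ν e = G.ν e)


lemma removal_path {L : Type} {P : List (EditOp L)} :
    ∀ {G G' : LGraph L}, IsEditPath G P G' → (∀ op ∈ P, op.isRemoval) →
      G'.V ⊆ G.V ∧ G'.E ⊆ G.E ∧ G'.μ = G.μ ∧ G'.ν = G.ν ∧
      ((∀ e ∈ G.E, e.1 ∈ G.V ∧ e.2 ∈ G.V) → ∀ e ∈ G'.E, e.1 ∈ G'.V ∧ e.2 ∈ G'.V) := by
  induction P with
  | nil =>
      intro G G' h _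
      cases h
      exact ⟨subset_rfl, subset_rfl, rfl, rfl, fun h => h⟩
  | cons op P ih =>
      intro G G' h hP
      cases h with
      | cons hleg htail =>
        obtain ⟨h1, h2, h3, h4, h5⟩ := ih htail (fun o ho => hP o (List.mem_cons_of_mem _ ho))
        have hop := hP op (List.mem_cons_self)
        cases op with
        | rmV v =>
            refine ⟨h1.trans (Finset.erase_subset _ _), h2, h3, h4, ?_⟩
            intro hc
            refine h5 ?_
            intro e he
            obtain ⟨hev, hev'⟩ := hc e he
            obtain ⟨_, hinc⟩ := hleg
            obtain ⟨hne1, hne2⟩ := hinc e he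
            exact ⟨Finset.mem_erase.2 ⟨hne1, hev⟩, Finset.mem_erase.2 ⟨hne2, hev'⟩⟩
        | rmE e =>
            refine ⟨h1, h2.trans (Finset.erase_subset _ _), h3, h4, ?_⟩
            intro hc
            exact h5 (fun f hf => hc f (Finset.mem_of_mem_erase hf))
        | insV v l => simp [EditOp.isRemoval] at hop
        | insE e l => simp [EditOp.isRemoval] at hop
        | subV v l => simp [EditOp.isRemoval] at hop
        | subE e l => simp [EditOp.isRemoval] at hop

lemma sub_path {L : Type} {P : List (EditOp L)} :
    ∀ {G G' : LGraph L}, IsEditPath G P G' → (∀ op ∈ P, op.isSubstitution) →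
      G'.V = G.V ∧ G'.E = G.E := by
  induction P with
  | nil => intro G G' h _; cases h; exact ⟨rfl, rfl⟩
  | cons op P ih =>
      intro G G' h hP
      cases h with
      | cons hleg htail =>
        obtain ⟨h1, h2⟩ := ih htail (fun o ho => hP o (List.mem_cons_of_mem _ ho))
        have hop := hP op (List.mem_cons_self)
        cases op with
        | subV v l => exact ⟨h1, h2⟩
        | subE e l => exact ⟨h1, h2⟩
        | rmV v => simp [EditOp.isSubstitution] at hop
        | rmE e => simp [EditOp.isSubstitution] at hop
        | insV v l => simp [EditOp.isSubstitution] at hop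
        | insE e l => simp [EditOp.isSubstitution] at hop

lemma ins_path {L : Type} {P : List (EditOp L)} :
    ∀ {G G' : LGraph L}, IsEditPath G P G' → (∀ op ∈ P, op.isInsertion) →
      G.V ⊆ G'.V ∧ G.E ⊆ G'.E ∧ (∀ v ∈ G.V, G'.μ v = G.μ v) ∧
      (∀ e ∈ G.E, G'.ν e = G.ν e) := by
  induction P with
  | nil => intro G G' h _; cases h; exact ⟨subset_rfl, subset_rfl, fun _ _ => rfl, fun _ _ => rfl⟩
  | cons op P ih =>
      intro G G' h hP
      cases h with
      | cons hleg htail =>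
        obtain ⟨h1, h2, h3, h4⟩ := ih htail (fun o ho => hP o (List.mem_cons_of_mem _ ho))
        have hop := hP op (List.mem_cons_self)
        cases op with
        | insV v l =>
            refine ⟨(Finset.subset_insert _ _).trans h1, h2, ?_, h4⟩
            intro w hw
            have hne : w ≠ v := fun hwv => hleg (hwv ▸ hw)
            have := h3 w (Finset.mem_insert_of_mem hw)
            simpa [LGraph.apply, Function.update_of_ne hne] using this
        | insE e l =>
            refine ⟨h1, (Finset.subset_insert _ _).trans h2, h3, ?_⟩
            intro f hf
            have hne : f ≠ e := fun hfe => hleg.2.2.1 (hfe ▸ hf)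
            have := h4 f (Finset.mem_insert_of_mem hf)
            simpa [LGraph.apply, Function.update_of_ne hne] using this
        | subV v l => simp [EditOp.isInsertion] at hop
        | subE e l => simp [EditOp.isInsertion] at hop
        | rmV v => simp [EditOp.isInsertion] at hop
        | rmE e => simp [EditOp.isInsertion] at hop

/-- for an independent edit path from `G1` to `G2` reordered as
removals `R`, substitutions `S`, insertions `I`: the graph `H1` obtained from
`G1` by `R` is a subgraph of `G1`; the graph `H2` obtained from `G1` by `(R,S)`
is a subgraph of `G2`; and `H1`, `H2` have the same underlying unlabeled
structure (they are structurally isomorphic). -/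
theorem indep_editPath_subgraphs {L : Type} (G1 G2 H1 H2 : LGraph L)
    (R S I : List (EditOp L)) (hG1 : G1.IsSimple)
    (hR : ∀ op ∈ R, op.isRemoval) (hS : ∀ op ∈ S, op.isSubstitution)
    (hI : ∀ op ∈ I, op.isInsertion)
    (hInd : Indep (R ++ S ++ I))
    (h1 : IsEditPath G1 R H1) (h2 : IsEditPath H1 S H2) (h3 : IsEditPath H2 I G2) :
    Subgraph H1 G1 ∧ Subgraph H2 G2 ∧ H1.V = H2.V ∧ H1.E = H2.E := by
  obtain ⟨r1, r2, r3, r4, r5⟩ := removal_path h1 hR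
  obtain ⟨s1, s2⟩ := sub_path h2 hS
  obtain ⟨i1, i2, i3, i4⟩ := ins_path h3 hI
  have hclosed1 : ∀ e ∈ H1.E, e.1 ∈ H1.V ∧ e.2 ∈ H1.V := r5 hG1.1
  refine ⟨⟨r1, r2, hclosed1, fun v _ => congrFun r3 v, fun e _ => congrFun r4 e⟩, ?_, s1.symm, s2.symm⟩
  exact ⟨i1, i2, fun e he => by
      have := hclosed1 e (s2 ▸ he)
      exact ⟨s1 ▸ this.1, s1 ▸ this.2⟩,
    fun v hv => (i3 v hv).symm, fun e he => (i4 e he).symm⟩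
end

section
/- Let \u03c6: \u0124\u2081 \u2192 V2 be the injective partial function associated with a restricted edit path P between simple graphs G1 and G2, with V\u0302\u2082=\u03c6(\u0124\u2081). Define R12 = {(i,j)\u2208E1\u2229(\u0124\u2081\u00d7\u0124\u2081) : (\u03c6(i),\u03c6(j))\u2209E2} and I21 = {(k,l)\u2208E2\u2229(V\u0302\u2082\u00d7V\u0302\u2082) : (\u03c6\u207b\u00b9(k),\u03c6\u207b\u00b9(l))\u2209E1}. Then the substituted edges are exactly \u00ca1 = (E1\u2229(\u0124\u2081\u00d7\u0124\u2081))\\R12, with \u03c6(\u00ca1) = (E2\u2229(V\u0302\u2082\u00d7V\u0302\u2082))\\I21, the removed edges are E1\\\u00ca1, and the inserted edges are E2\\\u03c6(\u00ca1). -/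
/-- A labeled graph. -/
structure LabeledGraph (L : Type) where
  V : Finset ℕ
  E : Finset (ℕ × ℕ)
  μ : ℕ → L
  ν : ℕ × ℕ → L

/-- A graph is simple: edges join existing vertices and there are no self-loops. -/
def LabeledGraph.IsSimple {L : Type} (G : LabeledGraph L) : Prop :=
  (∀ e ∈ G.E, e.1 ∈ G.V ∧ e.2 ∈ G.V) ∧ (∀ e ∈ G.E, e.1 ≠ e.2)

/-- A restricted edit path from `G1` to `G2`, presented by its canonical
normal form: the sets of node substitutions (pairs `(i,k)` with `i ∈ V1`
substituted to `k ∈ V2`), node removals, node insertions, and the induced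
edge substitutions, removals and insertions.  The coherence conditions state
that node substitutions form an injective partial mapping, that every
non-substituted node of `G1` is removed and every non-substituted node of `G2`
is inserted (no element is removed and then inserted), and that an edge is
substituted exactly when both its endpoints are substituted to the endpoints
of an edge of `G2`, all remaining edges being removed or inserted. -/
structure RestrictedEditPath {L : Type} (G1 G2 : LabeledGraph L) where
  nsub : Finset (ℕ × ℕ)
  nrem : Finset ℕ
  nins : Finset ℕ
  esub : Finset ((ℕ × ℕ) × (ℕ × ℕ))
  erem : Finset (ℕ × ℕ)
  eins : Finset (ℕ × ℕ)
  nsub_mem : ∀ p ∈ nsub, p.1 ∈ G1.V ∧ p.2 ∈ G2.V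
  nsub_fun : ∀ p ∈ nsub, ∀ q ∈ nsub, p.1 = q.1 → p.2 = q.2
  nsub_inj : ∀ p ∈ nsub, ∀ q ∈ nsub, p.2 = q.2 → p.1 = q.1
  nrem_eq : nrem = G1.V \ nsub.image Prod.fst
  nins_eq : nins = G2.V \ nsub.image Prod.snd
  esub_mem : ∀ q ∈ esub, q.1 ∈ G1.E ∧ q.2 ∈ G2.E ∧
      (q.1.1, q.2.1) ∈ nsub ∧ (q.1.2, q.2.2) ∈ nsub
  esub_total : ∀ e ∈ G1.E, ∀ k l : ℕ,
      (e.1, k) ∈ nsub → (e.2, l) ∈ nsub → (k, l) ∈ G2.E → (e, (k, l)) ∈ esub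
  erem_eq : erem = G1.E \ esub.image Prod.fst
  eins_eq : eins = G2.E \ esub.image Prod.snd


open scoped Classical in
/-- let `φ : Ĥ1 → V2` be the injective partial function associated
with a restricted edit path `P` between simple graphs `G1`, `G2`, with
`V̂2 = φ(Ĥ1)`, and let
`R12 = {(i,j) ∈ E1∩(Ĥ1×Ĥ1) : (φ i, φ j) ∉ E2}` and
`I21 = {(k,l) ∈ E2∩(V̂2×V̂2) : (φ⁻¹ k, φ⁻¹ l) ∉ E1}`.
Then the substituted edges are exactly `Ê1 = (E1∩(Ĥ1×Ĥ1)) \ R12`, their images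
form `φ(Ê1) = (E2∩(V̂2×V̂2)) \ I21`, the removed edges are `E1 \ Ê1` and the
inserted edges are `E2 \ φ(Ê1)`. -/
theorem restrictedEditPath_edge_sets {L : Type} (G1 G2 : LabeledGraph L)
    (h1 : G1.IsSimple) (h2 : G2.IsSimple)
    (P : RestrictedEditPath G1 G2) (H1 : Finset ℕ) (φ : ℕ → ℕ)
    (hφ : P.nsub = H1.image (fun i => (i, φ i)))
    (hinj : Set.InjOn φ ↑H1) :
    letI V2h : Finset ℕ := H1.image φ
    letI R12 : Finset (ℕ × ℕ) :=
      (G1.E ∩ H1 ×ˢ H1).filter (fun e => (φ e.1, φ e.2) ∉ G2.E)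
    letI I21 : Finset (ℕ × ℕ) :=
      (G2.E ∩ V2h ×ˢ V2h).filter
        (fun f => ∀ i ∈ H1, ∀ j ∈ H1, φ i = f.1 → φ j = f.2 → (i, j) ∉ G1.E)
    P.esub.image Prod.fst = (G1.E ∩ H1 ×ˢ H1) \ R12
    ∧ P.esub.image Prod.snd = (G2.E ∩ V2h ×ˢ V2h) \ I21
    ∧ P.erem = G1.E \ P.esub.image Prod.fst
    ∧ P.eins = G2.E \ P.esub.image Prod.snd := by
  have hns : ∀ i k, (i, k) ∈ P.nsub ↔ i ∈ H1 ∧ k = φ i := by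
    intro i k
    simp only [hφ, Finset.mem_image, Prod.mk.injEq]
    constructor
    · rintro ⟨a, ha, rfl, rfl⟩; exact ⟨ha, rfl⟩
    · rintro ⟨ha, rfl⟩; exact ⟨i, ha, rfl, rfl⟩
  refine ⟨?_, ?_, P.erem_eq, P.eins_eq⟩
  · ext e
    simp only [Finset.mem_image, Finset.mem_sdiff, Finset.mem_filter,
      Finset.mem_inter, Finset.mem_product, not_and, not_not]
    constructor
    · rintro ⟨q, hq, rfl⟩
      obtain ⟨h1e, h2e, hk, hl⟩ := P.esub_mem q hq
      rw [hns] at hk hl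
      refine ⟨⟨h1e, hk.1, hl.1⟩, fun _ => ?_⟩
      rw [← hk.2, ← hl.2, Prod.mk.eta]; exact h2e
    · rintro ⟨⟨he1, hi, hj⟩, h2⟩
      have h2' := h2 ⟨he1, hi, hj⟩
      have := P.esub_total e he1 (φ e.1) (φ e.2)
        ((hns _ _).2 ⟨hi, rfl⟩) ((hns _ _).2 ⟨hj, rfl⟩) h2'
      exact ⟨_, this, rfl⟩
  · ext f
    simp only [Finset.mem_image, Finset.mem_sdiff, Finset.mem_filter,
      Finset.mem_inter, Finset.mem_product, not_and, not_forall, not_not]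
    constructor
    · rintro ⟨q, hq, rfl⟩
      obtain ⟨h1e, h2e, hk, hl⟩ := P.esub_mem q hq
      rw [hns] at hk hl
      refine ⟨⟨h2e, ⟨q.1.1, hk.1, hk.2.symm⟩, ⟨q.1.2, hl.1, hl.2.symm⟩⟩, fun _ => ?_⟩
      exact ⟨q.1.1, hk.1, q.1.2, hl.1, hk.2.symm, hl.2.symm, by rw [Prod.mk.eta]; exact h1e⟩
    · rintro ⟨⟨hf2, hf1v, hf2v⟩, h⟩
      obtain ⟨i, hi, j, hj, hφi, hφj, hij⟩ := h ⟨hf2, hf1v, hf2v⟩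
      have := P.esub_total (i, j) hij f.1 f.2
        ((hns _ _).2 ⟨hi, hφi.symm⟩) ((hns _ _).2 ⟨hj, hφj.symm⟩) (by rw [Prod.mk.eta]; exact hf2)
      exact ⟨_, this, Prod.mk.eta⟩
end

section
/- There is a bijection between the set of \u03b5-assignment matrices up to the equivalence relation (ignoring the auxiliary block X^\u03b5) and the set of injective partial functions from X={1,…,n} to Y={1,…,m}. -/
/-- An `ε`-assignment matrix: an `(n+m) × (m+n)` permutation matrix (0/1
entries, all row and column sums equal to 1) whose removal block (rows `< n`,
columns `≥ m`) and insertion block (rows `≥ n`, columns `< m`) have zero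
off-diagonal entries: row `i < n` may only use dummy column `ε_i` (column
`m + i`) and dummy row `ε_j` (row `n + j`) may only use column `j`. -/
def EpsAssignMatrix (n m : ℕ) : Type :=
  {X : Matrix (Fin (n + m)) (Fin (m + n)) ℕ //
    (∀ i j, X i j = 0 ∨ X i j = 1) ∧
    (∀ i, ∑ j, X i j = 1) ∧
    (∀ j, ∑ i, X i j = 1) ∧
    (∀ (i : Fin (n + m)) (j : Fin (m + n)),
      (i : ℕ) < n → m ≤ (j : ℕ) → X i j = 1 → (j : ℕ) = m + (i : ℕ)) ∧
    (∀ (i : Fin (n + m)) (j : Fin (m + n)),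
      n ≤ (i : ℕ) → (j : ℕ) < m → X i j = 1 → (i : ℕ) = n + (j : ℕ))}

/-- Two `ε`-assignment matrices are equivalent iff they coincide outside of the
auxiliary block `X^ε` (rows `≥ n` and columns `≥ m`), i.e. their substitution,
removal and insertion blocks coincide. -/
def epsAssignSetoid (n m : ℕ) : Setoid (EpsAssignMatrix n m) where
  r X Y := ∀ (i : Fin (n + m)) (j : Fin (m + n)),
    ((i : ℕ) < n ∨ (j : ℕ) < m) → X.val i j = Y.val i j
  iseqv := ⟨fun _ _ _ _ => rfl,
    fun h i j hij => (h i j hij).symm,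
    fun h1 h2 i j hij => (h1 i j hij).trans (h2 i j hij)⟩

/-- Injective partial functions from `{1,…,n}` to `{1,…,m}`, presented by
their graphs: functional and injective sets of pairs. -/
def PartialInjFin (n m : ℕ) : Type :=
  {p : Finset (Fin n × Fin m) //
    (∀ a ∈ p, ∀ b ∈ p, a.1 = b.1 → a.2 = b.2) ∧
    (∀ a ∈ p, ∀ b ∈ p, a.2 = b.2 → a.1 = b.1)}

namespace EpsAux

variable {n m : ℕ}

lemma sum_unique {k : ℕ} {f : Fin k → ℕ} (h : ∑ j, f j = 1) {a b : Fin k}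
    (ha : f a = 1) (hb : f b = 1) : a = b := by
  by_contra hne
  have h2 : f a + f b ≤ ∑ j, f j := by
    rw [← Finset.sum_pair hne]
    exact Finset.sum_le_sum_of_subset (Finset.subset_univ _)
  omega

def Fmap (X : EpsAssignMatrix n m) : PartialInjFin n m :=
  ⟨Finset.univ.filter (fun a : Fin n × Fin m =>
      X.val (Fin.castAdd m a.1) (Fin.castAdd n a.2) = 1), by
    obtain ⟨X, h01, hrow, hcol, h4, h5⟩ := X
    constructor
    · intro a ha b hb hab
      simp only [Finset.mem_filter, Finset.mem_univ, true_and] at ha hb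
      rw [← hab] at hb
      have := sum_unique (hrow (Fin.castAdd m a.1)) ha hb
      exact Fin.ext (by simpa using congrArg Fin.val this)
    · intro a ha b hb hab
      simp only [Finset.mem_filter, Finset.mem_univ, true_and] at ha hb
      rw [← hab] at hb
      have := sum_unique (hcol (Fin.castAdd n a.2)) ha hb
      exact Fin.ext (by simpa using congrArg Fin.val this)⟩

def Gmat (p : PartialInjFin n m) : Matrix (Fin (n + m)) (Fin (m + n)) ℕ :=
  fun i j =>
    if hi : (i : ℕ) < n then
      if hj : (j : ℕ) < m then
        (if (⟨i, hi⟩, ⟨j, hj⟩) ∈ p.val then 1 else 0)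
      else
        (if (j : ℕ) = m + (i : ℕ) ∧ ∀ jj : Fin m, (⟨i, hi⟩, jj) ∉ p.val then 1 else 0)
    else
      if hj : (j : ℕ) < m then
        (if (i : ℕ) = n + (j : ℕ) ∧ ∀ ii : Fin n, (ii, ⟨j, hj⟩) ∉ p.val then 1 else 0)
      else
        (if (⟨(j : ℕ) - m, by have := j.isLt; omega⟩, ⟨(i : ℕ) - n, by have := i.isLt; omega⟩) ∈ p.val then 1 else 0)

lemma Gmat_sub (p : PartialInjFin n m) (i : Fin n) (j : Fin m) :
    Gmat p (Fin.castAdd m i) (Fin.castAdd n j) = if (i, j) ∈ p.val then 1 else 0 := by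
  simp [Gmat, i.isLt, j.isLt]

lemma Gmat_rem (p : PartialInjFin n m) (i : Fin n) (j : Fin n) :
    Gmat p (Fin.castAdd m i) (Fin.natAdd m j) =
      if j = i ∧ ∀ jj : Fin m, (i, jj) ∉ p.val then 1 else 0 := by
  have h1 : ((Fin.castAdd m i : Fin (n + m)) : ℕ) < n := by simpa using i.isLt
  have h2 : ¬ ((Fin.natAdd m j : Fin (m + n)) : ℕ) < m := by simp
  have h3 : (⟨((Fin.castAdd m i : Fin (n + m)) : ℕ), h1⟩ : Fin n) = i := Fin.ext (by simp)
  simp only [Gmat, dif_pos h1, dif_neg h2, h3]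
  simp [Fin.ext_iff]

lemma Gmat_ins (p : PartialInjFin n m) (i : Fin m) (j : Fin m) :
    Gmat p (Fin.natAdd n i) (Fin.castAdd n j) =
      if i = j ∧ ∀ ii : Fin n, (ii, j) ∉ p.val then 1 else 0 := by
  have h1 : ¬ ((Fin.natAdd n i : Fin (n + m)) : ℕ) < n := by simp
  have h2 : ((Fin.castAdd n j : Fin (m + n)) : ℕ) < m := by simpa using j.isLt
  have h3 : (⟨((Fin.castAdd n j : Fin (m + n)) : ℕ), h2⟩ : Fin m) = j := Fin.ext (by simp)
  simp only [Gmat, dif_neg h1, dif_pos h2, h3]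
  simp [Fin.ext_iff]

lemma Gmat_eps (p : PartialInjFin n m) (i : Fin m) (j : Fin n) :
    Gmat p (Fin.natAdd n i) (Fin.natAdd m j) = if (j, i) ∈ p.val then 1 else 0 := by
  have h1 : ¬ ((Fin.natAdd n i : Fin (n + m)) : ℕ) < n := by simp
  have h2 : ¬ ((Fin.natAdd m j : Fin (m + n)) : ℕ) < m := by simp
  simp only [Gmat, dif_neg h1, dif_neg h2]
  have h3 : (⟨((Fin.natAdd m j : Fin (m + n)) : ℕ) - m, by have := (Fin.natAdd m j).isLt; omega⟩ : Fin n) = j :=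
    Fin.ext (by simp)
  have h4 : (⟨((Fin.natAdd n i : Fin (n + m)) : ℕ) - n, by have := (Fin.natAdd n i).isLt; omega⟩ : Fin m) = i :=
    Fin.ext (by simp)
  rw [h3, h4]

lemma card_dom_le (p : PartialInjFin n m) (i : Fin n) :
    (Finset.univ.filter (fun jj : Fin m => (i, jj) ∈ p.val)).card ≤ 1 := by
  apply Finset.card_le_one.mpr
  intro a ha b hb
  simp only [Finset.mem_filter] at ha hb
  exact p.2.1 (i, a) ha.2 (i, b) hb.2 rfl

lemma card_ran_le (p : PartialInjFin n m) (j : Fin m) :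
    (Finset.univ.filter (fun ii : Fin n => (ii, j) ∈ p.val)).card ≤ 1 := by
  apply Finset.card_le_one.mpr
  intro a ha b hb
  simp only [Finset.mem_filter] at ha hb
  exact p.2.2 (a, j) ha.2 (b, j) hb.2 rfl

lemma sum_indicator_dom (p : PartialInjFin n m) (i : Fin n) :
    (∑ jj : Fin m, if (i, jj) ∈ p.val then 1 else 0) +
      (if ∀ jj : Fin m, (i, jj) ∉ p.val then 1 else 0) = 1 := by
  rw [Finset.sum_boole]
  by_cases h : ∃ jj : Fin m, (i, jj) ∈ p.val
  · obtain ⟨jj, hjj⟩ := h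
    have h1 : 0 < (Finset.univ.filter (fun jj : Fin m => (i, jj) ∈ p.val)).card :=
      Finset.card_pos.mpr ⟨jj, Finset.mem_filter.mpr ⟨Finset.mem_univ _, hjj⟩⟩
    have h2 := card_dom_le p i
    have h3 : ¬ ∀ jj : Fin m, (i, jj) ∉ p.val := by push_neg; exact ⟨jj, hjj⟩
    simp [h3]; omega
  · push_neg at h
    have : (Finset.univ.filter (fun jj : Fin m => (i, jj) ∈ p.val)) = ∅ := by
      apply Finset.filter_eq_empty_iff.mpr; intro x _; exact h x
    simp [this, h]

lemma sum_indicator_ran (p : PartialInjFin n m) (j : Fin m) :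
    (∑ ii : Fin n, if (ii, j) ∈ p.val then 1 else 0) +
      (if ∀ ii : Fin n, (ii, j) ∉ p.val then 1 else 0) = 1 := by
  rw [Finset.sum_boole]
  by_cases h : ∃ ii : Fin n, (ii, j) ∈ p.val
  · obtain ⟨ii, hii⟩ := h
    have h1 : 0 < (Finset.univ.filter (fun ii : Fin n => (ii, j) ∈ p.val)).card :=
      Finset.card_pos.mpr ⟨ii, Finset.mem_filter.mpr ⟨Finset.mem_univ _, hii⟩⟩
    have h2 := card_ran_le p j
    have h3 : ¬ ∀ ii : Fin n, (ii, j) ∉ p.val := by push_neg; exact ⟨ii, hii⟩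
    simp [h3]; omega
  · push_neg at h
    have : (Finset.univ.filter (fun ii : Fin n => (ii, j) ∈ p.val)) = ∅ := by
      apply Finset.filter_eq_empty_iff.mpr; intro x _; exact h x
    simp [this, h]

lemma Gmat_rowsum (p : PartialInjFin n m) (i : Fin (n + m)) :
    ∑ j, Gmat p i j = 1 := by
  induction i using Fin.addCases with
  | left i =>
    rw [Fin.sum_univ_add]
    simp only [Gmat_sub, Gmat_rem, ite_and, Finset.sum_ite_eq', Finset.mem_univ, if_true]
    exact sum_indicator_dom p i
  | right i =>
    rw [Fin.sum_univ_add]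
    simp only [Gmat_ins, Gmat_eps, ite_and, Finset.sum_ite_eq, Finset.mem_univ, if_true]
    rw [add_comm]
    exact sum_indicator_ran p i

lemma Gmat_colsum (p : PartialInjFin n m) (j : Fin (m + n)) :
    ∑ i, Gmat p i j = 1 := by
  induction j using Fin.addCases with
  | left j =>
    rw [Fin.sum_univ_add]
    simp only [Gmat_sub, Gmat_ins, ite_and, Finset.sum_ite_eq', Finset.mem_univ, if_true]
    exact sum_indicator_ran p j
  | right j =>
    rw [Fin.sum_univ_add]
    simp only [Gmat_rem, Gmat_eps, ite_and, Finset.sum_ite_eq, Finset.mem_univ, if_true]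
    rw [add_comm]
    exact sum_indicator_dom p j

lemma Gmat_01 (p : PartialInjFin n m) (i : Fin (n + m)) (j : Fin (m + n)) :
    Gmat p i j = 0 ∨ Gmat p i j = 1 := by
  unfold Gmat
  split_ifs <;> simp

def Gmap (p : PartialInjFin n m) : EpsAssignMatrix n m :=
  ⟨Gmat p, Gmat_01 p, Gmat_rowsum p, Gmat_colsum p, by
    intro i j hi hj h1
    simp only [Gmat, dif_pos hi, dif_neg (Nat.not_lt.mpr hj)] at h1
    by_cases hc : (j : ℕ) = m + (i : ℕ) ∧ ∀ jj : Fin m, (⟨i, hi⟩, jj) ∉ p.val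
    · exact hc.1
    · simp [hc] at h1, by
    intro i j hi hj h1
    simp only [Gmat, dif_neg (Nat.not_lt.mpr hi), dif_pos hj] at h1
    by_cases hc : (i : ℕ) = n + (j : ℕ) ∧ ∀ ii : Fin n, (ii, ⟨j, hj⟩) ∉ p.val
    · exact hc.1
    · simp [hc] at h1⟩

lemma mem_Fmap {X : EpsAssignMatrix n m} {a : Fin n × Fin m} :
    a ∈ (Fmap X).val ↔ X.val (Fin.castAdd m a.1) (Fin.castAdd n a.2) = 1 := by
  simp [Fmap]

lemma FG (p : PartialInjFin n m) : Fmap (Gmap p) = p := by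
  apply Subtype.ext
  ext a
  rw [mem_Fmap]
  show Gmat p (Fin.castAdd m a.1) (Fin.castAdd n a.2) = 1 ↔ a ∈ p.val
  rw [Gmat_sub]
  have ha : ((a.1, a.2) : Fin n × Fin m) = a := rfl
  rw [ha]
  by_cases hc : a ∈ p.val <;> simp [hc]

lemma keyA (X : EpsAssignMatrix n m) (i : Fin (n + m)) (j : Fin (m + n))
    (hi : (i : ℕ) < n) (hj : (j : ℕ) = m + (i : ℕ)) :
    X.val i j = 1 ↔ ∀ jj : Fin m, X.val i (Fin.castAdd n jj) = 0 := by
  obtain ⟨X, h01, hrow, hcol, h4, h5⟩ := X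
  have hs := hrow i
  rw [Fin.sum_univ_add] at hs
  have hsec : ∑ ii : Fin n, X i (Fin.natAdd m ii) = X i j := by
    rw [Finset.sum_eq_single (⟨(i : ℕ), hi⟩ : Fin n)]
    · congr 1; exact Fin.ext (by simp [hj])
    · intro ii _ hne
      rcases h01 i (Fin.natAdd m ii) with h | h
      · exact h
      · exfalso
        have hh := h4 i (Fin.natAdd m ii) hi (by simp) h
        simp only [Fin.coe_natAdd] at hh
        refine hne (Fin.ext ?_)
        show (ii : ℕ) = (i : ℕ)
        omega
    · intro habs; exact absurd (Finset.mem_univ _) habs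
  rw [hsec] at hs
  show X i j = 1 ↔ ∀ jj : Fin m, X i (Fin.castAdd n jj) = 0
  constructor
  · intro h1 jj
    rw [h1] at hs
    have hz : ∑ jj : Fin m, X i (Fin.castAdd n jj) = 0 := by simpa using hs
    exact (Finset.sum_eq_zero_iff.mp hz) jj (Finset.mem_univ _)
  · intro hall
    have hz : ∑ jj : Fin m, X i (Fin.castAdd n jj) = 0 :=
      Finset.sum_eq_zero fun jj _ => hall jj
    rwa [hz, Nat.zero_add] at hs

lemma keyB (X : EpsAssignMatrix n m) (i : Fin (n + m)) (j : Fin (m + n))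
    (hj : (j : ℕ) < m) (hi : (i : ℕ) = n + (j : ℕ)) :
    X.val i j = 1 ↔ ∀ ii : Fin n, X.val (Fin.castAdd m ii) j = 0 := by
  obtain ⟨X, h01, hrow, hcol, h4, h5⟩ := X
  have hs := hcol j
  rw [Fin.sum_univ_add] at hs
  have hsec : ∑ jj : Fin m, X (Fin.natAdd n jj) j = X i j := by
    rw [Finset.sum_eq_single (⟨(j : ℕ), hj⟩ : Fin m)]
    · congr 1; exact Fin.ext (by simp [hi])
    · intro jj _ hne
      rcases h01 (Fin.natAdd n jj) j with h | h
      · exact h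
      · exfalso
        have hh := h5 (Fin.natAdd n jj) j (by simp) hj h
        simp only [Fin.coe_natAdd] at hh
        refine hne (Fin.ext ?_)
        show (jj : ℕ) = (j : ℕ)
        omega
    · intro habs; exact absurd (Finset.mem_univ _) habs
  rw [hsec] at hs
  show X i j = 1 ↔ ∀ ii : Fin n, X (Fin.castAdd m ii) j = 0
  constructor
  · intro h1 ii
    rw [h1] at hs
    have hz : ∑ ii : Fin n, X (Fin.castAdd m ii) j = 0 := by simpa using hs
    exact (Finset.sum_eq_zero_iff.mp hz) ii (Finset.mem_univ _)
  · intro hall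
    have hz : ∑ ii : Fin n, X (Fin.castAdd m ii) j = 0 :=
      Finset.sum_eq_zero fun ii _ => hall ii
    rwa [hz, Nat.zero_add] at hs

lemma GF (X : EpsAssignMatrix n m) (i : Fin (n + m)) (j : Fin (m + n))
    (hij : (i : ℕ) < n ∨ (j : ℕ) < m) : Gmat (Fmap X) i j = X.val i j := by
  by_cases hi : (i : ℕ) < n
  · by_cases hj : (j : ℕ) < m
    · have e1 : Fin.castAdd m (⟨(i : ℕ), hi⟩ : Fin n) = i := Fin.ext rfl
      have e2 : Fin.castAdd n (⟨(j : ℕ), hj⟩ : Fin m) = j := Fin.ext rfl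
      calc Gmat (Fmap X) i j
          = Gmat (Fmap X) (Fin.castAdd m ⟨(i : ℕ), hi⟩) (Fin.castAdd n ⟨(j : ℕ), hj⟩) := by
            rw [e1, e2]
        _ = X.val i j := by
            rw [Gmat_sub]
            simp only [mem_Fmap, e1, e2]
            rcases X.2.1 i j with h | h <;> simp [h]
    · have hjm : m ≤ (j : ℕ) := Nat.not_lt.mp hj
      have e1 : Fin.castAdd m (⟨(i : ℕ), hi⟩ : Fin n) = i := Fin.ext rfl
      simp only [Gmat, dif_pos hi, dif_neg hj]
      have hmem : ∀ jj : Fin m,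
          ((⟨(i : ℕ), hi⟩ : Fin n), jj) ∈ (Fmap X).val ↔ X.val i (Fin.castAdd n jj) = 1 := by
        intro jj; rw [mem_Fmap]; rw [show (((⟨(i : ℕ), hi⟩ : Fin n), jj) : Fin n × Fin m).1 = (⟨(i : ℕ), hi⟩ : Fin n) from rfl, e1]
      by_cases he : (j : ℕ) = m + (i : ℕ)
      · have hA := keyA X i j hi he
        rcases X.2.1 i j with h | h
        · have hC : ¬ ((j : ℕ) = m + (i : ℕ) ∧ ∀ jj : Fin m, ((⟨i, hi⟩ : Fin n), jj) ∉ (Fmap X).val) := by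
            rintro ⟨-, hall⟩
            have hz : ∀ jj : Fin m, X.val i (Fin.castAdd n jj) = 0 := fun jj => by
              rcases X.2.1 i (Fin.castAdd n jj) with h' | h'
              · exact h'
              · exact absurd ((hmem jj).mpr h') (hall jj)
            have := hA.mpr hz
            omega
          rw [h, if_neg hC]
        · have hC : (j : ℕ) = m + (i : ℕ) ∧ ∀ jj : Fin m, ((⟨i, hi⟩ : Fin n), jj) ∉ (Fmap X).val := by
            refine ⟨he, fun jj hmem' => ?_⟩
            have h0 := hA.mp h jj
            have h1 := (hmem jj).mp hmem'
            omega
          rw [h, if_pos hC]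
      · have hC : ¬ ((j : ℕ) = m + (i : ℕ) ∧ ∀ jj : Fin m, ((⟨i, hi⟩ : Fin n), jj) ∉ (Fmap X).val) := by
          rintro ⟨he', -⟩; exact he he'
        rcases X.2.1 i j with h | h
        · rw [h, if_neg hC]
        · exact absurd (X.2.2.2.2.1 i j hi hjm h) he
  · have hj : (j : ℕ) < m := hij.resolve_left hi
    have hin : n ≤ (i : ℕ) := Nat.not_lt.mp hi
    have e2 : Fin.castAdd n (⟨(j : ℕ), hj⟩ : Fin m) = j := Fin.ext rfl
    simp only [Gmat, dif_neg hi, dif_pos hj]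
    have hmem : ∀ ii : Fin n,
        (ii, (⟨(j : ℕ), hj⟩ : Fin m)) ∈ (Fmap X).val ↔ X.val (Fin.castAdd m ii) j = 1 := by
      intro ii; rw [mem_Fmap]; rw [show ((ii, (⟨(j : ℕ), hj⟩ : Fin m)) : Fin n × Fin m).2 = (⟨(j : ℕ), hj⟩ : Fin m) from rfl, e2]
    by_cases he : (i : ℕ) = n + (j : ℕ)
    · have hB := keyB X i j hj he
      rcases X.2.1 i j with h | h
      · have hC : ¬ ((i : ℕ) = n + (j : ℕ) ∧ ∀ ii : Fin n, (ii, (⟨j, hj⟩ : Fin m)) ∉ (Fmap X).val) := by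
          rintro ⟨-, hall⟩
          have hz : ∀ ii : Fin n, X.val (Fin.castAdd m ii) j = 0 := fun ii => by
            rcases X.2.1 (Fin.castAdd m ii) j with h' | h'
            · exact h'
            · exact absurd ((hmem ii).mpr h') (hall ii)
          have := hB.mpr hz
          omega
        rw [h, if_neg hC]
      · have hC : (i : ℕ) = n + (j : ℕ) ∧ ∀ ii : Fin n, (ii, (⟨j, hj⟩ : Fin m)) ∉ (Fmap X).val := by
          refine ⟨he, fun ii hmem' => ?_⟩
          have h0 := hB.mp h ii
          have h1 := (hmem ii).mp hmem'
          omega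
        rw [h, if_pos hC]
    · have hC : ¬ ((i : ℕ) = n + (j : ℕ) ∧ ∀ ii : Fin n, (ii, (⟨j, hj⟩ : Fin m)) ∉ (Fmap X).val) := by
        rintro ⟨he', -⟩; exact he he'
      rcases X.2.1 i j with h | h
      · rw [h, if_neg hC]
      · exact absurd (X.2.2.2.2.2 i j hin hj h) he



end EpsAux

/-- there is a bijection between the set of `ε`-assignment
matrices up to equivalence (ignoring the auxiliary block `X^ε`) and the set of
injective partial functions from `{1,…,n}` to `{1,…,m}`. -/
theorem epsAssign_quotient_equiv_partialInj (n m : ℕ) :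
    Nonempty (Quotient (epsAssignSetoid n m) ≃ PartialInjFin n m) := by
  refine ⟨⟨Quotient.lift EpsAux.Fmap ?_, fun p => Quotient.mk _ (EpsAux.Gmap p), ?_, ?_⟩⟩
  · intro a b h
    apply Subtype.ext
    ext x
    rw [EpsAux.mem_Fmap, EpsAux.mem_Fmap,
      h (Fin.castAdd m x.1) (Fin.castAdd n x.2) (Or.inl (by simpa using x.1.isLt))]
  · intro q
    refine Quotient.inductionOn q fun X => ?_
    exact Quotient.sound fun i j hij => EpsAux.GF X i j hij
  · intro p
    exact EpsAux.FG p
end
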